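/- Best sublinear residual bound (Remark 1, first bound): Let d ≥ 1, let f, g : ℝ^d → ℝ be convex, and let h : ℝ^d → ℝ be convex and differentiable with L_h-Lipschitz gradient, L_h > 0. Set λ = 1/2 and α = (2 − λ)/L_h = 3/(2L_h). Then along any TOS trajectory with stepsize α and relaxation λ that admits a TOS fixed point (z*, x*, y*, p_g*, p_f*), one has for every k ≥ 1: min over 0 ≤ i < k of ‖p_f^i + p_g^i + ∇h(x_B^i)‖² ≤ 32 L_h² ‖z⁰ − z*‖² / (27 k). -/

import Mathlib

open scoped RealInnerProductSpace
open Filter Set Topology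

section TOSAux

variable {E : Type*} [NormedAddCommGroup E] [InnerProductSpace ℝ E] [CompleteSpace E]

open Filter Set Topology

variable {E : Type*} [NormedAddCommGroup E] [InnerProductSpace ℝ E] [CompleteSpace E]

lemma line_hasDerivAt (h : E → ℝ) (hgrad : E → E) (hdiff : ∀ x, HasGradientAt h (hgrad x) x)
    (x v : E) (t : ℝ) :
    HasDerivAt (fun s : ℝ => h (x + s • v)) ⟪hgrad (x + t • v), v⟫ t := by
  have hline : HasDerivAt (fun s : ℝ => x + s • v) v t := by
    simpa using ((hasDerivAt_id t).smul_const v).const_add x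
  have hf := (hasGradientAt_iff_hasFDerivAt.mp (hdiff (x + t • v)))
  have := hf.comp_hasDerivAt t hline
  simpa [InnerProductSpace.toDual_apply_apply, Function.comp_def] using this

lemma convex_grad_ineq (h : E → ℝ) (hh : ConvexOn ℝ Set.univ h)
    (hgrad : E → E) (hdiff : ∀ x, HasGradientAt h (hgrad x) x) (x w : E) :
    h x + ⟪hgrad x, w - x⟫ ≤ h w := by
  set v := w - x with hv
  set φ : ℝ → ℝ := fun t => h (x + t • v) with hφ
  have hφconv : ConvexOn ℝ Set.univ φ := by
    have h2 := hh.comp_affineMap (AffineMap.lineMap x w : ℝ →ᵃ[ℝ] E)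
    simp only [Set.preimage_univ] at h2
    have h3 : (h ∘ (AffineMap.lineMap x w : ℝ →ᵃ[ℝ] E)) = φ := by
      funext t
      simp only [Function.comp_apply, AffineMap.lineMap_apply_module, φ, hv]
      congr 1
      module
    rwa [h3] at h2
  have hder : HasDerivAt φ ⟪hgrad x, v⟫ 0 := by
    have := line_hasDerivAt h hgrad hdiff x v 0
    simpa using this
  have hslope : Tendsto (slope φ 0) (𝓝[>] 0) (𝓝 ⟪hgrad x, v⟫) :=
    (hasDerivAt_iff_tendsto_slope.mp hder).mono_left
      (nhdsWithin_mono _ fun t ht => ne_of_gt ht)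
  have hbound : ∀ᶠ t in 𝓝[>] (0:ℝ), slope φ 0 t ≤ φ 1 - φ 0 := by
    filter_upwards [Ioo_mem_nhdsGT_of_mem (Set.left_mem_Ico.mpr one_pos)] with t ht
    have := hφconv.secant_mono (Set.mem_univ 0) (Set.mem_univ t) (Set.mem_univ 1)
      (ne_of_gt ht.1) one_ne_zero ht.2.le
    rw [slope_def_field]
    simpa using this
  have hle : ⟪hgrad x, v⟫ ≤ φ 1 - φ 0 := le_of_tendsto hslope hbound
  have h0 : φ 0 = h x := by simp [φ]
  have h1 : φ 1 = h w := by simp [φ, hv]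
  rw [h0, h1] at hle
  linarith

lemma descent_lemma (h : E → ℝ) (hgrad : E → E) (hdiff : ∀ x, HasGradientAt h (hgrad x) x)
    (L : ℝ) (hL : 0 < L) (hlip : ∀ x y, ‖hgrad x - hgrad y‖ ≤ L * ‖x - y‖)
    (x v : E) : h (x + v) ≤ h x + ⟪hgrad x, v⟫ + L / 2 * ‖v‖ ^ 2 := by
  set c : ℝ := ⟪hgrad x, v⟫ with hc
  set ψ : ℝ → ℝ := fun t => h (x + t • v) - t * c - L / 2 * ‖v‖ ^ 2 * t ^ 2 with hψ
  have hder : ∀ t : ℝ, HasDerivAt ψ (⟪hgrad (x + t • v), v⟫ - c - L / 2 * ‖v‖ ^ 2 * (2 * t)) t := by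
    intro t
    have H := ((line_hasDerivAt h hgrad hdiff x v t).sub
      ((hasDerivAt_id t).mul_const c)).sub
      ((hasDerivAt_pow 2 t).const_mul (L / 2 * ‖v‖ ^ 2))
    convert H using 1
    · rfl
    · rfl
    · rfl
    push_cast
    ring
  have hanti : AntitoneOn ψ (Set.Icc 0 1) := by
    apply antitoneOn_of_deriv_nonpos (convex_Icc 0 1)
    · exact Continuous.continuousOn (by
        refine continuous_iff_continuousAt.mpr fun t => (hder t).differentiableAt.continuousAt)
    · intro t ht
      exact ((hder t).differentiableAt).differentiableWithinAt
    · intro t ht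
      rw [interior_Icc] at ht
      rw [(hder t).deriv]
      have h1 : ⟪hgrad (x + t • v), v⟫ - c = ⟪hgrad (x + t • v) - hgrad x, v⟫ := by
        rw [inner_sub_left]
      have h2 : ⟪hgrad (x + t • v) - hgrad x, v⟫ ≤ L * t * ‖v‖ ^ 2 := by
        calc ⟪hgrad (x + t • v) - hgrad x, v⟫ ≤ ‖hgrad (x + t • v) - hgrad x‖ * ‖v‖ :=
              real_inner_le_norm _ _
          _ ≤ (L * ‖x + t • v - x‖) * ‖v‖ := by
              gcongr; exact hlip _ _
          _ = L * t * ‖v‖ ^ 2 := by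
              rw [show x + t • v - x = t • v by abel, norm_smul, Real.norm_eq_abs,
                abs_of_pos ht.1]
              ring
      have := h1 ▸ h2
      nlinarith [this]
  have := hanti (Set.left_mem_Icc.mpr zero_le_one) (Set.right_mem_Icc.mpr zero_le_one) zero_le_one
  simp only [ψ] at this
  simp only [zero_smul, add_zero, one_smul, zero_mul, sub_zero, one_pow, mul_one,
    zero_pow, ne_eq, OfNat.ofNat_ne_zero, not_false_eq_true, mul_zero] at this
  linarith

lemma lower_bound (h : E → ℝ) (hh : ConvexOn ℝ Set.univ h)
    (hgrad : E → E) (hdiff : ∀ x, HasGradientAt h (hgrad x) x)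
    (L : ℝ) (hL : 0 < L) (hlip : ∀ x y, ‖hgrad x - hgrad y‖ ≤ L * ‖x - y‖)
    (x w : E) :
    h x + ⟪hgrad x, w - x⟫ + 1 / (2 * L) * ‖hgrad w - hgrad x‖ ^ 2 ≤ h w := by
  set D : E := hgrad w - hgrad x with hD
  have h1 := convex_grad_ineq h hh hgrad hdiff x (w + (-(1/L)) • D)
  have h2 := descent_lemma h hgrad hdiff L hL hlip w ((-(1/L)) • D)
  have e1 : ⟪hgrad x, w + (-(1/L)) • D - x⟫ = ⟪hgrad x, w - x⟫ - (1/L) * ⟪hgrad x, D⟫ := by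
    rw [show w + (-(1/L)) • D - x = (w - x) + (-(1/L)) • D by abel, inner_add_right,
      real_inner_smul_right]
    ring
  have e2 : ⟪hgrad w, (-(1/L)) • D⟫ = -(1/L) * ⟪hgrad w, D⟫ := real_inner_smul_right _ _ _
  have e3 : ‖(-(1/L)) • D‖ ^ 2 = (1/L)^2 * ‖D‖^2 := by
    rw [norm_smul, Real.norm_eq_abs, mul_pow, sq_abs]
    ring_nf
  have e4 : ⟪hgrad w, D⟫ - ⟪hgrad x, D⟫ = ‖D‖ ^ 2 := by
    rw [← inner_sub_left, ← hD, real_inner_self_eq_norm_sq]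
  rw [e1] at h1
  rw [e2, e3] at h2
  have hfield : L / 2 * ((1/L)^2 * ‖D‖^2) = 1/(2*L) * ‖D‖^2 := by
    field_simp
  rw [hfield] at h2
  have h6 : (1/L) * ⟪hgrad w, D⟫ - (1/L) * ⟪hgrad x, D⟫ = (1/L) * ‖D‖^2 := by
    rw [← mul_sub, e4]
  have h5 : 1/(2*L) * ‖D‖^2 + 1/(2*L) * ‖D‖^2 = (1/L) * ‖D‖^2 := by
    field_simp
    ring
  linarith [h1, h2, h6, h5]

lemma cocoercive (h : E → ℝ) (hh : ConvexOn ℝ Set.univ h)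
    (hgrad : E → E) (hdiff : ∀ x, HasGradientAt h (hgrad x) x)
    (L : ℝ) (hL : 0 < L) (hlip : ∀ x y, ‖hgrad x - hgrad y‖ ≤ L * ‖x - y‖)
    (x w : E) :
    (1 / L) * ‖hgrad x - hgrad w‖ ^ 2 ≤ ⟪hgrad x - hgrad w, x - w⟫ := by
  have h1 := lower_bound h hh hgrad hdiff L hL hlip x w
  have h2 := lower_bound h hh hgrad hdiff L hL hlip w x
  have e1 : ‖hgrad w - hgrad x‖ = ‖hgrad x - hgrad w‖ := norm_sub_rev _ _
  have e2 : ⟪hgrad x - hgrad w, x - w⟫ = ⟪hgrad x, x - w⟫ - ⟪hgrad w, x - w⟫ := inner_sub_left _ _ _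
  have e3 : ⟪hgrad x, w - x⟫ = - ⟪hgrad x, x - w⟫ := by
    rw [show w - x = -(x-w) by abel, inner_neg_right]
  rw [e1] at h1
  have e5 : ⟪hgrad w, x - w⟫ = ⟪hgrad w, x - w⟫ := rfl
  have h5 : 1/(2*L) * ‖hgrad x - hgrad w‖^2 + 1/(2*L) * ‖hgrad x - hgrad w‖^2
      = (1/L) * ‖hgrad x - hgrad w‖^2 := by
    field_simp
    ring
  linarith [h1, h2, e2, e3, h5]

lemma tos_step (α : ℝ) (hα : 0 < α) (ζ u v w : E)
    (h1 : 0 ≤ ⟪u, ζ - α • u⟫)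
    (h2 : 0 ≤ ⟪v, (ζ - α • u) - α • (u + v + w)⟫)
    (h3 : (2 * α / 3) * ⟪w, w⟫ ≤ ⟪w, ζ - α • u⟫) :
    ⟪ζ - (α/2) • (u + v + w), ζ - (α/2) • (u + v + w)⟫
      + (3 * α ^ 2 / 8) * ⟪u + v + w, u + v + w⟫ ≤ ⟪ζ, ζ⟫ := by
  have hY : (0:ℝ) ≤ ⟪w - (3/4 : ℝ) • (u + v + w), w - (3/4 : ℝ) • (u + v + w)⟫ :=
    real_inner_self_nonneg
  simp only [inner_sub_left, inner_sub_right, inner_add_left, inner_add_right,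
    real_inner_smul_left, real_inner_smul_right] at h1 h2 h3 hY ⊢
  have c1 : ⟪v, u⟫ = ⟪u, v⟫ := real_inner_comm u v
  have c2 : ⟪w, u⟫ = ⟪u, w⟫ := real_inner_comm u w
  have c3 : ⟪w, v⟫ = ⟪v, w⟫ := real_inner_comm v w
  have c4 : ⟪u, ζ⟫ = ⟪ζ, u⟫ := real_inner_comm ζ u
  have c5 : ⟪v, ζ⟫ = ⟪ζ, v⟫ := real_inner_comm ζ v
  have c6 : ⟪w, ζ⟫ = ⟪ζ, w⟫ := real_inner_comm ζ w
  simp only [c1, c2, c3, c4, c5, c6] at h1 h2 h3 hY ⊢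
  have A1 : 0 ≤ α * (⟪ζ, u⟫ - α * ⟪u, u⟫) := by
    apply mul_nonneg hα.le
    linarith [h1]
  have A2 := mul_nonneg hα.le h2
  have A3 := mul_nonneg hα.le (sub_nonneg.mpr h3)
  have A4 := mul_nonneg (by positivity : (0:ℝ) ≤ 2 * α ^ 2 / 3) hY
  nlinarith [A1, A2, A3, A4]

end TOSAux

/-- **Remark 1, first bound** (best sublinear residual bound). With `λ = 1/2` and
`α = 3/(2L_h)`, any TOS trajectory admitting a fixed point satisfies, for every `k ≥ 1`,
`min_{0 ≤ i < k} ‖p_f^i + p_g^i + ∇h(x_B^i)‖² ≤ 32 L_h² ‖z⁰ − z*‖² / (27 k)`. -/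
theorem tos_best_sublinear_residual_bound
    {d : ℕ} (hd : 1 ≤ d)
    (f g h : EuclideanSpace ℝ (Fin d) → ℝ)
    (hgrad : EuclideanSpace ℝ (Fin d) → EuclideanSpace ℝ (Fin d))
    (L_h : ℝ) (hLh : 0 < L_h)
    (hf : ConvexOn ℝ Set.univ f) (hg : ConvexOn ℝ Set.univ g)
    (hh : ConvexOn ℝ Set.univ h)
    (hdiff : ∀ x, HasGradientAt h (hgrad x) x)
    (hlip : ∀ x y, ‖hgrad x - hgrad y‖ ≤ L_h * ‖x - y‖)
    (α lam : ℝ) (hlam : lam = 1 / 2) (hα : α = 3 / (2 * L_h))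
    -- TOS trajectory
    (z xB y xA pg pf : ℕ → EuclideanSpace ℝ (Fin d))
    (hsubg : ∀ k w, g (xB k) + ⟪pg k, w - xB k⟫ ≤ g w)
    (hsubf : ∀ k w, f (xA k) + ⟪pf k, w - xA k⟫ ≤ f w)
    (hxB : ∀ k, xB k = z k - α • pg k)
    (hy : ∀ k, y k = (2 : ℝ) • xB k - z k - α • hgrad (xB k))
    (hxA : ∀ k, xA k = y k - α • pf k)
    (hz : ∀ k, z (k + 1) = z k + lam • (xA k - xB k))
    -- TOS fixed point
    (zs xs ys pgs pfs : EuclideanSpace ℝ (Fin d))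
    (hsubgs : ∀ w, g xs + ⟪pgs, w - xs⟫ ≤ g w)
    (hsubfs : ∀ w, f xs + ⟪pfs, w - xs⟫ ≤ f w)
    (hxs : xs = zs - α • pgs)
    (hys : ys = (2 : ℝ) • xs - zs - α • hgrad xs)
    (hxAs : xs = ys - α • pfs)
    (k : ℕ) (hk : 1 ≤ k) :
    ∃ i < k, ‖pf i + pg i + hgrad (xB i)‖ ^ 2 ≤
      32 * L_h ^ 2 * ‖z 0 - zs‖ ^ 2 / (27 * k) := by
  have hα0 : 0 < α := by rw [hα]; positivity
  -- fixed-point residual is zero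
  have hsum0 : pgs + pfs + hgrad xs = 0 := by
    have h1 : xs = (2:ℝ) • xs - zs - α • hgrad xs - α • pfs := by
      conv_lhs => rw [hxAs, hys]
    have h2 : α • (pgs + pfs + hgrad xs) = 0 := by
      linear_combination (norm := module) h1 + hxs
    rcases smul_eq_zero.mp h2 with h'|h'
    · exact absurd h' hα0.ne'
    · exact h'
  -- per-iteration contraction
  have step : ∀ i : ℕ, ‖z (i+1) - zs‖ ^ 2
      + 3 * α ^ 2 / 8 * ‖pf i + pg i + hgrad (xB i)‖ ^ 2 ≤ ‖z i - zs‖ ^ 2 := by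
    intro i
    have hBdiff : xB i - xs = (z i - zs) - α • (pg i - pgs) := by
      linear_combination (norm := module) (hxB i) - hxs
    have hAdiff : xA i - xs = ((z i - zs) - α • (pg i - pgs))
        - α • ((pg i - pgs) + (pf i - pfs) + (hgrad (xB i) - hgrad xs)) := by
      linear_combination (norm := module) (hxA i) + (hy i) + (2:ℝ) • (hxB i) - hxs
        - α • hsum0
    have hznext : z (i+1) - zs = (z i - zs)
        - (α/2) • ((pg i - pgs) + (pf i - pfs) + (hgrad (xB i) - hgrad xs)) := by
      rw [hz i, hlam]
      linear_combination (norm := module) ((1:ℝ)/2) • hAdiff - ((1:ℝ)/2) • hBdiff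
    have hsum_eq : (pg i - pgs) + (pf i - pfs) + (hgrad (xB i) - hgrad xs)
        = pf i + pg i + hgrad (xB i) := by
      linear_combination (norm := module) - hsum0
    have h1' : 0 ≤ ⟪pg i - pgs, (z i - zs) - α • (pg i - pgs)⟫ := by
      rw [← hBdiff]
      have a1 := hsubg i xs
      have a2 := hsubgs (xB i)
      simp only [inner_sub_left, inner_sub_right] at a1 a2 ⊢
      linarith
    have h2' : 0 ≤ ⟪pf i - pfs, ((z i - zs) - α • (pg i - pgs))
        - α • ((pg i - pgs) + (pf i - pfs) + (hgrad (xB i) - hgrad xs))⟫ := by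
      rw [← hAdiff]
      have a1 := hsubf i xs
      have a2 := hsubfs (xA i)
      simp only [inner_sub_left, inner_sub_right] at a1 a2 ⊢
      linarith
    have h3' : (2 * α / 3) * ⟪hgrad (xB i) - hgrad xs, hgrad (xB i) - hgrad xs⟫
        ≤ ⟪hgrad (xB i) - hgrad xs, (z i - zs) - α • (pg i - pgs)⟫ := by
      rw [← hBdiff]
      have hco := cocoercive h hh hgrad hdiff L_h hLh hlip (xB i) xs
      have e1 : (2 * α / 3) = 1 / L_h := by rw [hα]; field_simp
      have e2 : ⟪hgrad (xB i) - hgrad xs, hgrad (xB i) - hgrad xs⟫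
          = ‖hgrad (xB i) - hgrad xs‖ ^ 2 := real_inner_self_eq_norm_sq _
      rw [e1, e2]
      exact hco
    have H := tos_step α hα0 (z i - zs) (pg i - pgs) (pf i - pfs)
      (hgrad (xB i) - hgrad xs) h1' h2' h3'
    rw [← hznext] at H
    rw [hsum_eq] at H
    rwa [real_inner_self_eq_norm_sq, real_inner_self_eq_norm_sq,
      real_inner_self_eq_norm_sq] at H
  -- telescoping
  have tel : ∀ n : ℕ, 3 * α ^ 2 / 8 *
      ∑ i ∈ Finset.range n, ‖pf i + pg i + hgrad (xB i)‖ ^ 2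
      + ‖z n - zs‖ ^ 2 ≤ ‖z 0 - zs‖ ^ 2 := by
    intro n
    induction n with
    | zero => simp
    | succ n ih =>
      rw [Finset.sum_range_succ]
      have := step n
      linarith
  -- conclude by contradiction
  by_contra hcon
  push_neg at hcon
  have hk0 : (0:ℝ) < (k:ℝ) := by exact_mod_cast Nat.lt_of_lt_of_le Nat.zero_lt_one hk
  have hsum : (k:ℝ) * (32 * L_h ^ 2 * ‖z 0 - zs‖ ^ 2 / (27 * k))
      < ∑ i ∈ Finset.range k, ‖pf i + pg i + hgrad (xB i)‖ ^ 2 := by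
    have := Finset.sum_lt_sum_of_nonempty (Finset.nonempty_range_iff.mpr (by omega))
      (fun i hi => hcon i (Finset.mem_range.mp hi))
    simpa [Finset.sum_const, Finset.card_range, nsmul_eq_mul] using this
  have hbound : 3 * α ^ 2 / 8 * ∑ i ∈ Finset.range k, ‖pf i + pg i + hgrad (xB i)‖ ^ 2
      ≤ ‖z 0 - zs‖ ^ 2 := by
    have := tel k
    nlinarith [sq_nonneg ‖z k - zs‖]
  have hc27 : 3 * α ^ 2 / 8 = 27 / (32 * L_h ^ 2) := by
    rw [hα]; field_simp; ring
  have hkB : (k:ℝ) * (32 * L_h ^ 2 * ‖z 0 - zs‖ ^ 2 / (27 * k))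
      = 32 * L_h ^ 2 * ‖z 0 - zs‖ ^ 2 / 27 := by
    field_simp
  rw [hkB] at hsum
  rw [hc27] at hbound
  have hpos : (0:ℝ) < 27 / (32 * L_h ^ 2) := by positivity
  have := mul_lt_mul_of_pos_left hsum hpos
  have heq : 27 / (32 * L_h ^ 2) * (32 * L_h ^ 2 * ‖z 0 - zs‖ ^ 2 / 27)
      = ‖z 0 - zs‖ ^ 2 := by field_simp
  rw [heq] at this
  linarith
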